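/- For the derivation D of A = ℂ⟨u^{±1},v^{±1}⟩ given by D(u) = uv - uv⁻¹ - v⁻¹ and D(v) = -vu + vu⁻¹ + u⁻¹, the element h = u + v + u⁻¹ + v⁻¹ + u⁻¹v⁻¹ satisfies the Lax equation D(h) = [h, M] with M = v + u⁻¹, where [a,b] = ab - ba. -/

import Mathlib

/- STATEMENT 4: For the Kontsevich derivation D of A = ℂ⟨u^{±1},v^{±1}⟩,
the element h = u + v + u⁻¹ + v⁻¹ + u⁻¹v⁻¹ satisfies the Lax equation
D(h) = [h, M] with M = v + u⁻¹. -/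

noncomputable section

abbrev A : Type := MonoidAlgebra ℂ (FreeGroup Bool)

def u : A := MonoidAlgebra.of ℂ (FreeGroup Bool) (FreeGroup.of false)
def v : A := MonoidAlgebra.of ℂ (FreeGroup Bool) (FreeGroup.of true)
def ui : A := MonoidAlgebra.of ℂ (FreeGroup Bool) (FreeGroup.of false)⁻¹
def vi : A := MonoidAlgebra.of ℂ (FreeGroup Bool) (FreeGroup.of true)⁻¹

def h : A := u + v + ui + vi + ui * vi
def M : A := v + ui

theorem kontsevich_lax_equation
    (D : A →ₗ[ℂ] A)
    (hD : ∀ a b : A, D (a * b) = D a * b + a * D b)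
    (hu : D u = u * v - u * vi - vi)
    (hv : D v = -(v * u) + v * ui + ui) :
    D h = h * M - M * h := by
  have huui : u * ui = 1 := by
    rw [u, ui, ← map_mul]; simp [MonoidAlgebra.one_def]
  have hiuu : ui * u = 1 := by
    rw [u, ui, ← map_mul]; simp [MonoidAlgebra.one_def]
  have hvvi : v * vi = 1 := by
    rw [v, vi, ← map_mul]; simp [MonoidAlgebra.one_def]
  have hviv : vi * v = 1 := by
    rw [v, vi, ← map_mul]; simp [MonoidAlgebra.one_def]
  have h1 : D 1 = 0 := by
    have h2 : D 1 = D 1 + D 1 := by simpa using hD 1 1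
    exact (right_eq_add.mp h2)
  have hDui : D ui = -(ui * (D u) * ui) := by
    have e : D (u * ui) = 0 := by rw [huui, h1]
    rw [hD] at e
    have e2 : ui * (D u * ui + u * D ui) = 0 := by rw [e, mul_zero]
    rw [mul_add, ← mul_assoc ui u (D ui), hiuu, one_mul] at e2
    rw [eq_neg_iff_add_eq_zero, add_comm, mul_assoc]
    exact e2
  have hDvi : D vi = -(vi * (D v) * vi) := by
    have e : D (v * vi) = 0 := by rw [hvvi, h1]
    rw [hD] at e
    have e2 : vi * (D v * vi + v * D vi) = 0 := by rw [e, mul_zero]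
    rw [mul_add, ← mul_assoc vi v (D vi), hviv, one_mul] at e2
    rw [eq_neg_iff_add_eq_zero, add_comm, mul_assoc]
    exact e2
  have goal : D h = h * M - M * h := by
    rw [h, M]
    have K1 : ∀ x : A, u * (ui * x) = x := fun x => by rw [← mul_assoc, huui, one_mul]
    have K2 : ∀ x : A, ui * (u * x) = x := fun x => by rw [← mul_assoc, hiuu, one_mul]
    have K3 : ∀ x : A, v * (vi * x) = x := fun x => by rw [← mul_assoc, hvvi, one_mul]
    have K4 : ∀ x : A, vi * (v * x) = x := fun x => by rw [← mul_assoc, hviv, one_mul]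
    rw [map_add, map_add, map_add, map_add, hD, hu, hv, hDui, hDvi, hu, hv]
    simp only [mul_add, add_mul, mul_sub, sub_mul, neg_mul, mul_neg, neg_neg, neg_add,
      neg_sub, mul_assoc, huui, hiuu, hvvi, hviv, K1, K2, K3, K4, mul_one, one_mul]
    abel
  exact goal
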